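/- Let W(z) = z - log(z) for z > 0 and L(w) = w + log(w) for w > 0. Then for any z ≥ 1, L(W(z)) = z - ε(z) where 0 ≤ ε(z) ≤ log(z)/(z - log(z)). -/

import Mathlib

open Real

/-- Lambert-type approximate inverse: with `W z = z - log z`, `L w = w + log w`,
and `ε z = log z - log (z - log z)`, for every `z ≥ 1` we have
`L (W z) = z - ε z` with `0 ≤ ε z ≤ log z / (z - log z)`. -/
theorem logLambert_approx_inverse
    (W L ε : ℝ → ℝ)
    (hW : ∀ z > 0, W z = z - Real.log z)
    (hL : ∀ w > 0, L w = w + Real.log w)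
    (hε : ∀ z, ε z = Real.log z - Real.log (z - Real.log z)) :
    ∀ z ≥ 1, L (W z) = z - ε z ∧ 0 ≤ ε z ∧ ε z ≤ Real.log z / (z - Real.log z) := by
  intro z hz
  have hz0 : (0:ℝ) < z := lt_of_lt_of_le one_pos hz
  have hlog : Real.log z ≤ z - 1 := Real.log_le_sub_one_of_pos hz0
  have hlog0 : 0 ≤ Real.log z := Real.log_nonneg hz
  have hw1 : (1:ℝ) ≤ z - Real.log z := by linarith
  have hw0 : (0:ℝ) < z - Real.log z := lt_of_lt_of_le one_pos hw1
  have hWz : W z = z - Real.log z := hW z hz0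
  have hLW : L (W z) = (z - Real.log z) + Real.log (z - Real.log z) := by
    rw [hWz]; exact hL _ hw0
  refine ⟨by rw [hLW, hε]; ring, ?_, ?_⟩
  · rw [hε]
    have : Real.log (z - Real.log z) ≤ Real.log z :=
      Real.log_le_log (by linarith) (by linarith)
    linarith
  · rw [hε]
    have key : Real.log (z / (z - Real.log z)) ≤ z / (z - Real.log z) - 1 :=
      Real.log_le_sub_one_of_pos (div_pos hz0 hw0)
    rw [Real.log_div (ne_of_gt hz0) (ne_of_gt hw0)] at key
    have : z / (z - Real.log z) - 1 = Real.log z / (z - Real.log z) := by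
      field_simp
      ring
    linarith
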